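/- Let E ⊆ X be a Borel subset of a metric space, u : E → ℝ^k a map that is L-biLipschitz with its image, and μ a finite Borel measure on X concentrated on E such that u_*(μ) ≪ ℒ^k (Lebesgue measure on ℝ^k). Then μ ≪ H^k, the k-dimensional Hausdorff measure on X. -/

import Mathlib

open MeasureTheory
open scoped MeasureTheory ENNReal NNReal

/-- If `μ` is a finite Borel measure concentrated on `E`, `u` is `L`-biLipschitz with its
image on `E`, and `u_* μ ≪ ℒ^k`, then `μ ≪ H^k`. -/
theorem absolutelyContinuous_hausdorff_of_pushforward
    {X : Type*} [MetricSpace X] [MeasurableSpace X] [BorelSpace X]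
    (k : ℕ) (E : Set X) (u : X → EuclideanSpace ℝ (Fin k)) (hu : Measurable u)
    (L : ℝ) (hL : 1 ≤ L)
    (hbil : ∀ x ∈ E, ∀ y ∈ E,
      L⁻¹ * dist x y ≤ ‖u x - u y‖ ∧ ‖u x - u y‖ ≤ L * dist x y)
    (μ : Measure X) [IsFiniteMeasure μ] (hconc : μ Eᶜ = 0)
    (habs : μ.map u ≪ volume) :
    μ ≪ μH[(k : ℝ)] := by
  intro s hs
  -- reduce to s ∩ E
  have hsE : μH[(k : ℝ)] (s ∩ E) = 0 :=
    le_antisymm (hs ▸ measure_mono Set.inter_subset_left) zero_le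
  -- work in the pi space
  set e := (MeasurableEquiv.toLp 2 (Fin k → ℝ)).symm with he
  set v : X → (Fin k → ℝ) := fun x => e (u x) with hv
  have hvmeas : Measurable v := e.measurable.comp hu
  -- v is Lipschitz on E with constant L.toNNReal
  have hlip : LipschitzOnWith L.toNNReal v (s ∩ E) := by
    intro x hx y hy
    calc edist (v x) (v y) ≤ edist (u x) (u y) := by
          have h := (PiLp.lipschitzWith_ofLp 2 (fun _ : Fin k => ℝ)) (u x) (u y)
          rw [ENNReal.coe_one, one_mul] at h; exact h
      _ = ENNReal.ofReal ‖u x - u y‖ := by rw [edist_dist, dist_eq_norm]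
      _ ≤ ENNReal.ofReal (L * dist x y) :=
          ENNReal.ofReal_le_ofReal (hbil x hx.2 y hy.2).2
      _ = (L.toNNReal : ℝ≥0∞) * ENNReal.ofReal (dist x y) := by
          rw [ENNReal.ofReal_mul (by linarith), ENNReal.ofReal]
      _ = (L.toNNReal : ℝ≥0∞) * edist x y := by rw [edist_dist]
  -- image of s ∩ E under v is Hausdorff-null in pi space
  have himg : μH[(k : ℝ)] (v '' (s ∩ E)) = 0 := by
    have := hlip.hausdorffMeasure_image_le (d := (k : ℝ)) (by positivity)
    rw [hsE, mul_zero] at this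
    exact le_antisymm this zero_le
  -- hence Lebesgue-null
  have hvol : volume (v '' (s ∩ E)) = 0 := by
    have hpi : (μH[(k : ℝ)] : Measure (Fin k → ℝ)) = volume := by
      simpa using (hausdorffMeasure_pi_real (ι := Fin k))
    rw [← hpi]; exact himg
  -- choose a measurable null superset
  obtain ⟨B, hAB, hBmeas, hBvol⟩ := exists_measurable_superset_of_null hvol
  -- pull back through v
  have hmapv : μ.map v ≪ (volume : Measure (Fin k → ℝ)) := by
    have h1 : μ.map v = (μ.map u).map e := by
      rw [Measure.map_map e.measurable hu]; rfl
    have h2 : (μ.map u).map e ≪ (volume : Measure (EuclideanSpace ℝ (Fin k))).map e :=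
      habs.map e.measurable
    rw [(EuclideanSpace.volume_preserving_symm_measurableEquiv_toLp (Fin k)).map_eq] at h2
    rw [h1]; exact h2
  have hBnull : μ (v ⁻¹' B) = 0 := by
    have := hmapv hBvol
    rwa [Measure.map_apply hvmeas hBmeas] at this
  -- conclude
  refine le_antisymm ?_ zero_le
  have hsub : s ∩ E ⊆ v ⁻¹' B := fun x hx => hAB ⟨x, hx, rfl⟩
  calc μ s ≤ μ (s ∩ E) + μ Eᶜ := by
        refine (measure_mono ?_).trans (measure_union_le _ _)
        intro x hx
        by_cases hxE : x ∈ E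
        · exact Or.inl ⟨hx, hxE⟩
        · exact Or.inr hxE
    _ = μ (s ∩ E) := by rw [hconc, add_zero]
    _ ≤ μ (v ⁻¹' B) := measure_mono hsub
    _ = 0 := hBnull
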